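/- Let Z = ∏_{p ∈ P} ℤ/n_p (a finite product of cyclic groups) and let B be the real Z×Z matrix B_{ij} = b_{(j-i,P)}, where (x,P) := { p ∈ P : x_p = 0 } and b : Powerset(P) → ℝ. Then the Fourier transform diagonalizes B: for each character χ = ∏_p χ_p of Z with support k_χ = { p : χ_p nontrivial }, the corresponding eigenvalue of B is ∑_{d ⊆ P} b_d · ∏_{p ∈ P \ d, p ∉ k_χ} (n_p - 1) · ∏_{p ∈ P \ d, p ∈ k_χ} (-1). In particular B is positive semidefinite if and only if these quantities are nonnegative for all k ⊆ P. -/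

import Mathlib

open Matrix
open Complex Finset
open scoped ComplexOrder

set_option linter.unusedSectionVars false

noncomputable def zEta (n : ℕ) (m : ℤ) : ℂ :=
  Complex.exp (2 * Real.pi * Complex.I * ((m : ℂ) / (n : ℂ)))

lemma zEta_zero (n : ℕ) : zEta n 0 = 1 := by simp [zEta]

lemma zEta_add (n : ℕ) (m₁ m₂ : ℤ) : zEta n (m₁ + m₂) = zEta n m₁ * zEta n m₂ := by
  rw [zEta, zEta, zEta, ← Complex.exp_add]
  congr 1; push_cast; ring

lemma zEta_dvd (n : ℕ) [NeZero n] (m : ℤ) (h : (n : ℤ) ∣ m) : zEta n m = 1 := by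
  obtain ⟨k, rfl⟩ := h
  have hn : (n : ℂ) ≠ 0 := Nat.cast_ne_zero.2 (NeZero.ne n)
  have harg : 2 * Real.pi * Complex.I * (((n * k : ℤ) : ℂ) / (n : ℂ))
      = (k : ℤ) * (2 * Real.pi * Complex.I) := by
    push_cast; field_simp
  rw [zEta, harg, Complex.exp_int_mul_two_pi_mul_I]

lemma zEta_congr (n : ℕ) [NeZero n] {m m' : ℤ} (h : (n : ℤ) ∣ m' - m) :
    zEta n m' = zEta n m := by
  have : zEta n m' = zEta n (m + (m' - m)) := by ring_nf
  rw [this, zEta_add, zEta_dvd n _ h, mul_one]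

lemma zEta_pow (n : ℕ) (c : ℤ) (k : ℕ) : zEta n (c * k) = (zEta n c) ^ k := by
  rw [zEta, zEta, ← Complex.exp_nat_mul]
  congr 1; push_cast; ring

lemma zEta_eq_one_iff (n : ℕ) [NeZero n] (m : ℤ) : zEta n m = 1 ↔ (n : ℤ) ∣ m := by
  constructor
  · intro h
    rw [zEta, Complex.exp_eq_one_iff] at h
    obtain ⟨j, hj⟩ := h
    have hn : (n : ℂ) ≠ 0 := Nat.cast_ne_zero.2 (NeZero.ne n)
    have hπ : (2 * (Real.pi:ℂ) * Complex.I) ≠ 0 := by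
      simp [Real.pi_ne_zero, Complex.I_ne_zero, Complex.ofReal_ne_zero]
    have h2 : (2 * (Real.pi:ℂ) * Complex.I) * ((m:ℂ) / n) = (2 * (Real.pi:ℂ) * Complex.I) * j := by
      rw [hj]; ring
    have h3 : (m : ℂ) / n = j := mul_left_cancel₀ hπ h2
    have : (m : ℂ) = n * j := by
      rw [div_eq_iff hn] at h3; rw [h3]; ring
    refine ⟨j, ?_⟩
    exact_mod_cast this
  · exact zEta_dvd n m

lemma conj_zEta (n : ℕ) (m : ℤ) : (starRingEnd ℂ) (zEta n m) = zEta n (-m) := by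
  rw [zEta, zEta, ← Complex.exp_conj]
  congr 1
  simp only [_root_.map_mul, map_div₀, Complex.conj_I, Complex.conj_ofReal, map_ofNat,
    map_intCast, map_natCast]
  push_cast
  ring

lemma zmod_sum_eq_range (n : ℕ) [NeZero n] (f : ℕ → ℂ) :
    ∑ x : ZMod n, f x.val = ∑ i ∈ Finset.range n, f i := by
  refine Finset.sum_nbij' (fun x => x.val) (fun i => (i : ZMod n)) ?_ ?_ ?_ ?_ ?_
  · intro x _; exact Finset.mem_range.2 (ZMod.val_lt x)
  · intro i _; exact Finset.mem_univ _
  · intro x _; exact ZMod.natCast_rightInverse x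
  · intro i hi; exact ZMod.val_cast_of_lt (Finset.mem_range.1 hi)
  · intro x _; rfl

lemma zEta_sum (n : ℕ) [NeZero n] (c : ℤ) :
    ∑ x : ZMod n, zEta n (c * (x.val : ℤ)) = if (c : ZMod n) = 0 then (n : ℂ) else 0 := by
  have hrw : ∀ x : ZMod n, zEta n (c * (x.val : ℤ)) = (zEta n c) ^ x.val := by
    intro x; exact_mod_cast zEta_pow n c x.val
  simp only [hrw]
  rw [zmod_sum_eq_range n (fun i => (zEta n c) ^ i)]
  by_cases h : (c : ZMod n) = 0
  · have hd : (n : ℤ) ∣ c := (ZMod.intCast_zmod_eq_zero_iff_dvd c n).1 h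
    have h1 : zEta n c = 1 := zEta_dvd n c hd
    simp [h1, h]
  · have h1 : zEta n c ≠ 1 := by
      rw [Ne, zEta_eq_one_iff]
      exact fun hd => h ((ZMod.intCast_zmod_eq_zero_iff_dvd c n).2 hd)
    rw [geom_sum_eq h1, if_neg h]
    have hn : zEta n c ^ n = 1 := by
      rw [← zEta_pow]
      exact zEta_dvd n _ ⟨c, by ring⟩
    rw [hn, sub_self, zero_div]

lemma dvd_of_zmod_cast_eq {n : ℕ} {A B : ℤ} (h : ((A : ZMod n)) = (B : ZMod n)) :
    (n : ℤ) ∣ B - A := by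
  have h0 : ((B - A : ℤ) : ZMod n) = 0 := by push_cast; rw [h]; ring
  exact (ZMod.intCast_zmod_eq_zero_iff_dvd _ n).1 h0

noncomputable def zE {n : ℕ} (a x : ZMod n) : ℂ := zEta n ((a.val : ℤ) * (x.val : ℤ))

lemma zE_zero_right {n : ℕ} [NeZero n] (a : ZMod n) : zE a 0 = 1 := by
  simp [zE, ZMod.val_zero, zEta_zero]

lemma zE_add_right {n : ℕ} [NeZero n] (a x z : ZMod n) :
    zE a (x + z) = zE a x * zE a z := by
  rw [zE, zE, zE, ← zEta_add]
  refine zEta_congr n (dvd_of_zmod_cast_eq ?_)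
  push_cast [ZMod.natCast_val, ZMod.cast_id]
  ring

lemma conj_zE {n : ℕ} [NeZero n] (a x : ZMod n) :
    (starRingEnd ℂ) (zE a x) = zE (-a) x := by
  rw [zE, zE, conj_zEta]
  refine zEta_congr n (dvd_of_zmod_cast_eq ?_)
  push_cast [ZMod.natCast_val, ZMod.cast_id]
  ring

lemma zE_mul_conj_self {n : ℕ} [NeZero n] (a x : ZMod n) :
    (starRingEnd ℂ) (zE a x) * zE a x = 1 := by
  rw [conj_zE, zE, zE, ← zEta_add]
  refine zEta_dvd n _ ?_
  have h0 : ((0 : ℤ) : ZMod n) = ((((-a).val : ℤ) * (x.val : ℤ) + (a.val : ℤ) * (x.val : ℤ) : ℤ) : ZMod n) := by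
    push_cast [ZMod.natCast_val, ZMod.cast_id]
    ring
  simpa using dvd_of_zmod_cast_eq h0

lemma zE_sum_right {n : ℕ} [NeZero n] (a : ZMod n) :
    ∑ x : ZMod n, zE a x = if a = 0 then (n : ℂ) else 0 := by
  rw [show (∑ x : ZMod n, zE a x) = ∑ x : ZMod n, zEta n ((a.val : ℤ) * (x.val : ℤ)) from rfl,
    zEta_sum]
  congr 1
  simp [ZMod.natCast_val, ZMod.cast_id]

lemma zE_comm {n : ℕ} (a x : ZMod n) : zE a x = zE x a := by
  rw [zE, zE, mul_comm]

lemma zE_ortho {n : ℕ} [NeZero n] (y' y : ZMod n) :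
    ∑ a : ZMod n, zE a y' * (starRingEnd ℂ) (zE a y)
      = if y' = y then (n : ℂ) else 0 := by
  have hterm : ∀ a : ZMod n, zE a y' * (starRingEnd ℂ) (zE a y)
      = zEta n ((((y'.val : ℤ) - (y.val : ℤ))) * (a.val : ℤ)) := by
    intro a
    rw [zE, zE, conj_zEta, ← zEta_add]
    refine zEta_congr n (dvd_of_zmod_cast_eq ?_)
    push_cast [ZMod.natCast_val, ZMod.cast_id]
    ring
  simp only [hterm]
  have := zEta_sum n ((y'.val : ℤ) - (y.val : ℤ))
  rw [this]
  have hc : (((y'.val : ℤ) - (y.val : ℤ) : ℤ) : ZMod n) = y' - y := by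
    push_cast [ZMod.natCast_val, ZMod.cast_id]
    ring
  rw [hc]
  simp [sub_eq_zero]

variable {P : Type*} [Fintype P] [DecidableEq P]

/-- The structured matrix `B_{ij} = b_{(j-i,P)}` on `Z = ∏_p ℤ/n_p`, where
`(x,P)` is the set of coordinates where `x` vanishes. -/
noncomputable def sieveMatrix (n : P → ℕ) [∀ p, NeZero (n p)] (b : Finset P → ℝ) :
    Matrix ((p : P) → ZMod (n p)) ((p : P) → ZMod (n p)) ℝ :=
  fun i j => b (Finset.univ.filter fun p => j p - i p = 0)

/-- The eigenvalue of `sieveMatrix n b` attached to a character with support `k`. -/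
noncomputable def sieveEigenvalue (n : P → ℕ) (b : Finset P → ℝ) (k : Finset P) : ℝ :=
  ∑ d : Finset P, b d *
    ((∏ p ∈ (Finset.univ \ d) \ k, ((n p : ℝ) - 1)) *
      ∏ _p ∈ (Finset.univ \ d) ∩ k, (-1 : ℝ))

variable (n : P → ℕ) [∀ p, NeZero (n p)]

noncomputable def chi (a x : (p : P) → ZMod (n p)) : ℂ := ∏ p, zE (a p) (x p)

lemma chi_add_right (a x z : (p : P) → ZMod (n p)) :
    chi n a (x + z) = chi n a x * chi n a z := by
  simp only [chi, Pi.add_apply, zE_add_right, Finset.prod_mul_distrib]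

lemma conj_chi_mul_self (a x : (p : P) → ZMod (n p)) :
    (starRingEnd ℂ) (chi n a x) * chi n a x = 1 := by
  rw [chi, map_prod, ← Finset.prod_mul_distrib]
  exact Finset.prod_eq_one fun p _ => zE_mul_conj_self _ _

lemma chi_ortho (y' y : (p : P) → ZMod (n p)) :
    ∑ a : (p : P) → ZMod (n p), chi n a y' * (starRingEnd ℂ) (chi n a y)
      = if y' = y then (∏ p, (n p : ℂ)) else 0 := by
  have h1 : ∀ a : (p : P) → ZMod (n p), chi n a y' * (starRingEnd ℂ) (chi n a y)
      = ∏ p, (zE (a p) (y' p) * (starRingEnd ℂ) (zE (a p) (y p))) := by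
    intro a
    rw [chi, chi, map_prod, ← Finset.prod_mul_distrib]
  simp only [h1]
  rw [← Fintype.piFinset_univ, ← Finset.prod_univ_sum (fun _ => Finset.univ)
    (fun p (j : ZMod (n p)) => zE j (y' p) * (starRingEnd ℂ) (zE j (y p)))]
  have h2 : ∀ p, (∑ j : ZMod (n p), zE j (y' p) * (starRingEnd ℂ) (zE j (y p)))
      = if y' p = y p then ((n p : ℂ)) else 0 := fun p => zE_ortho _ _
  rw [Finset.prod_congr rfl fun p _ => h2 p]
  by_cases h : y' = y
  · subst h; simp
  · rw [if_neg h]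
    obtain ⟨p, hp⟩ := Function.ne_iff.1 h
    exact Finset.prod_eq_zero (Finset.mem_univ p) (if_neg hp)

lemma eig_sum (b : Finset P → ℝ) (a : (p : P) → ZMod (n p)) :
    ∑ z : (p : P) → ZMod (n p), ((b (Finset.univ.filter fun p => z p = 0) : ℝ) : ℂ) * chi n a z
      = ((sieveEigenvalue n b (Finset.univ.filter fun p => a p ≠ 0) : ℝ) : ℂ) := by
  classical
  set k : Finset P := Finset.univ.filter fun p => a p ≠ 0 with hk
  rw [← Finset.sum_fiberwise Finset.univ
    (fun z : (p : P) → ZMod (n p) => Finset.univ.filter fun p => z p = 0)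
    (fun z => ((b (Finset.univ.filter fun p => z p = 0) : ℝ) : ℂ) * chi n a z)]
  have hfiber : ∀ d : Finset P,
      (∑ z ∈ Finset.univ.filter
          (fun z : (p : P) → ZMod (n p) => (Finset.univ.filter fun p => z p = 0) = d),
        ((b (Finset.univ.filter fun p => z p = 0) : ℝ) : ℂ) * chi n a z)
      = ((b d : ℝ) : ℂ) *
          ((∏ p ∈ (Finset.univ \ d) \ k, ((n p : ℂ) - 1)) *
            ∏ _p ∈ (Finset.univ \ d) ∩ k, (-1 : ℂ)) := by
    intro d
    -- replace b (filter ...) by b d on the fiber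
    rw [Finset.sum_congr rfl (fun z hz => by
      rw [(Finset.mem_filter.1 hz).2])]
    rw [← Finset.mul_sum]
    congr 1
    -- identify the fiber with a piFinset
    have hset : (Finset.univ.filter
          (fun z : (p : P) → ZMod (n p) => (Finset.univ.filter fun p => z p = 0) = d))
        = Fintype.piFinset (fun p => if p ∈ d then ({0} : Finset (ZMod (n p)))
            else Finset.univ \ {0}) := by
      ext z
      simp only [Finset.mem_filter, Finset.mem_univ, true_and, Fintype.mem_piFinset,
        Finset.ext_iff]
      constructor
      · intro h p
        by_cases hp : p ∈ d
        · simp only [hp, if_true, Finset.mem_singleton]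
          exact (h p).2 hp
        · simp only [hp, if_false, Finset.mem_sdiff, Finset.mem_univ, true_and,
            Finset.mem_singleton]
          intro h0
          exact hp ((h p).1 (by simp [h0]))
      · intro h p
        by_cases hp : p ∈ d <;> specialize h p <;> simp [hp] at h <;> simp [hp, h]
    rw [hset]
    simp only [chi]
    rw [← Finset.prod_univ_sum (fun p => if p ∈ d then ({0} : Finset (ZMod (n p)))
      else Finset.univ \ {0}) (fun p (j : ZMod (n p)) => zE (a p) j)]
    have hterm : ∀ p, (∑ j ∈ (if p ∈ d then ({0} : Finset (ZMod (n p)))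
        else Finset.univ \ {0}), zE (a p) j)
        = if p ∈ d then 1 else ((if a p = 0 then (n p : ℂ) else 0) - 1) := by
      intro p
      by_cases hp : p ∈ d
      · simp [hp, zE_zero_right]
      · rw [if_neg hp, if_neg hp, Finset.sum_sdiff_eq_sub (Finset.subset_univ _),
          zE_sum_right, Finset.sum_singleton, zE_zero_right]
    rw [Finset.prod_congr rfl fun p _ => hterm p]
    rw [← Finset.prod_sdiff (Finset.subset_univ d)]
    have hd1 : (∏ p ∈ d, (if p ∈ d then (1:ℂ) else ((if a p = 0 then (n p : ℂ) else 0) - 1)))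
        = 1 := Finset.prod_eq_one fun p hp => if_pos hp
    rw [hd1, mul_one]
    have hGrw : ∀ p ∈ Finset.univ \ d,
        (if p ∈ d then (1:ℂ) else ((if a p = 0 then (n p : ℂ) else 0) - 1))
          = ((if a p = 0 then (n p : ℂ) else 0) - 1) :=
      fun p hp => if_neg (Finset.mem_sdiff.1 hp).2
    rw [Finset.prod_congr rfl hGrw]
    have hsub : (Finset.univ \ d) ∩ k ⊆ Finset.univ \ d := Finset.inter_subset_left
    rw [← Finset.prod_sdiff hsub]
    have hsd : (Finset.univ \ d) \ ((Finset.univ \ d) ∩ k) = (Finset.univ \ d) \ k := by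
      ext p; simp only [Finset.mem_sdiff, Finset.mem_inter]; tauto
    rw [hsd]
    congr 1
    · refine Finset.prod_congr rfl fun p hp => ?_
      have hpk : p ∉ k := (Finset.mem_sdiff.1 hp).2
      have ha : a p = 0 := by
        by_contra hne
        exact hpk (by simp [hk, hne])
      rw [if_pos ha]
    · refine Finset.prod_congr rfl fun p hp => ?_
      have hpk : p ∈ k := (Finset.mem_inter.1 hp).2
      have ha : a p ≠ 0 := by
        have := Finset.mem_filter.1 (hk ▸ hpk)
        exact this.2
      rw [if_neg ha]
      norm_num
  rw [Finset.sum_congr rfl fun d _ => hfiber d]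
  rw [sieveEigenvalue]
  push_cast
  rfl

lemma mulVec_chi (b : Finset P → ℝ) (a x : (p : P) → ZMod (n p)) :
    ∑ y : (p : P) → ZMod (n p), ((sieveMatrix n b x y : ℝ) : ℂ) * chi n a y
      = ((sieveEigenvalue n b (Finset.univ.filter fun p => a p ≠ 0) : ℝ) : ℂ) * chi n a x := by
  have hre : ∑ y : (p : P) → ZMod (n p), ((sieveMatrix n b x y : ℝ) : ℂ) * chi n a y
      = ∑ z : (p : P) → ZMod (n p), ((sieveMatrix n b x (x + z) : ℝ) : ℂ) * chi n a (x + z) :=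
    (Fintype.sum_equiv (Equiv.addLeft x)
      (fun z => ((sieveMatrix n b x (x + z) : ℝ) : ℂ) * chi n a (x + z))
      (fun y => ((sieveMatrix n b x y : ℝ) : ℂ) * chi n a y) (fun z => rfl)).symm
  rw [hre]
  have hentry : ∀ z : (p : P) → ZMod (n p),
      sieveMatrix n b x (x + z) = b (Finset.univ.filter fun p => z p = 0) := by
    intro z
    unfold sieveMatrix
    congr 1
    ext p
    simp [add_sub_cancel_left]
  calc ∑ z : (p : P) → ZMod (n p), ((sieveMatrix n b x (x + z) : ℝ) : ℂ) * chi n a (x + z)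
      = ∑ z : (p : P) → ZMod (n p),
          chi n a x * (((b (Finset.univ.filter fun p => z p = 0) : ℝ) : ℂ) * chi n a z) := by
        refine Finset.sum_congr rfl fun z _ => ?_
        rw [hentry z, chi_add_right]
        ring
    _ = chi n a x * ∑ z : (p : P) → ZMod (n p),
          ((b (Finset.univ.filter fun p => z p = 0) : ℝ) : ℂ) * chi n a z := by
        rw [Finset.mul_sum]
    _ = _ := by rw [eig_sum]; ring

lemma entry_identity (b : Finset P → ℝ) (x y : (p : P) → ZMod (n p)) :
    ∑ a : (p : P) → ZMod (n p),
        ((sieveEigenvalue n b (Finset.univ.filter fun p => a p ≠ 0) : ℝ) : ℂ) *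
          (chi n a x * (starRingEnd ℂ) (chi n a y))
      = (∏ p, (n p : ℂ)) * ((sieveMatrix n b x y : ℝ) : ℂ) := by
  have h1 : ∀ a : (p : P) → ZMod (n p),
      ((sieveEigenvalue n b (Finset.univ.filter fun p => a p ≠ 0) : ℝ) : ℂ) *
          (chi n a x * (starRingEnd ℂ) (chi n a y))
        = ∑ y' : (p : P) → ZMod (n p),
            ((sieveMatrix n b x y' : ℝ) : ℂ) * (chi n a y' * (starRingEnd ℂ) (chi n a y)) := by
    intro a
    rw [← mul_assoc, ← mulVec_chi, Finset.sum_mul]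
    exact Finset.sum_congr rfl fun y' _ => by ring
  simp only [h1]
  rw [Finset.sum_comm]
  have h2 : ∀ y' : (p : P) → ZMod (n p),
      ∑ a : (p : P) → ZMod (n p),
          ((sieveMatrix n b x y' : ℝ) : ℂ) * (chi n a y' * (starRingEnd ℂ) (chi n a y))
        = ((sieveMatrix n b x y' : ℝ) : ℂ) *
            (if y' = y then (∏ p, (n p : ℂ)) else 0) := by
    intro y'
    rw [← Finset.mul_sum, chi_ortho]
  simp only [h2, mul_ite, mul_zero]
  rw [Finset.sum_ite_eq' Finset.univ y
    (fun y' => ((sieveMatrix n b x y' : ℝ) : ℂ) * ∏ p, (n p : ℂ))]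
  simp [mul_comm]

lemma prod_n_pos : (0:ℝ) < ∏ p, (n p : ℝ) :=
  Finset.prod_pos fun p _ => by
    exact_mod_cast Nat.pos_of_ne_zero (NeZero.ne (n p))

lemma quad_nonneg (b : Finset P → ℝ)
    (hb : ∀ k : Finset P, 0 ≤ sieveEigenvalue n b k) (v : ((p : P) → ZMod (n p)) → ℝ) :
    0 ≤ ∑ x : (p : P) → ZMod (n p), v x * ∑ y : (p : P) → ZMod (n p), sieveMatrix n b x y * v y := by
  classical
  set N : ℝ := ∏ p, (n p : ℝ) with hN
  have hNpos : (0:ℝ) < N := prod_n_pos n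
  set Q : ℝ := ∑ x : ((p : P) → ZMod (n p)), v x * ∑ y : ((p : P) → ZMod (n p)), sieveMatrix n b x y * v y with hQ
  set S : ((p : P) → ZMod (n p)) → ℂ := fun a => ∑ x : ((p : P) → ZMod (n p)), (v x : ℂ) * chi n a x with hS
  have hconjS : ∀ a : ((p : P) → ZMod (n p)), (starRingEnd ℂ) (S a) = ∑ y : ((p : P) → ZMod (n p)), (v y : ℂ) * (starRingEnd ℂ) (chi n a y) := by
    intro a
    rw [hS, map_sum]
    exact Finset.sum_congr rfl fun y _ => by rw [_root_.map_mul, Complex.conj_ofReal]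
  have key : ∑ a : ((p : P) → ZMod (n p)), ((sieveEigenvalue n b (Finset.univ.filter fun p => a p ≠ 0) : ℝ) : ℂ) *
      (S a * (starRingEnd ℂ) (S a)) = (N : ℂ) * (Q : ℂ) := by
    have h1 : ∀ a : ((p : P) → ZMod (n p)), ((sieveEigenvalue n b (Finset.univ.filter fun p => a p ≠ 0) : ℝ) : ℂ) *
        (S a * (starRingEnd ℂ) (S a))
        = ∑ x : ((p : P) → ZMod (n p)), ∑ y : ((p : P) → ZMod (n p)), ((v x : ℂ) * (v y : ℂ)) *
            (((sieveEigenvalue n b (Finset.univ.filter fun p => a p ≠ 0) : ℝ) : ℂ) *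
              (chi n a x * (starRingEnd ℂ) (chi n a y))) := by
      intro a
      rw [hconjS, hS, Finset.sum_mul_sum, Finset.mul_sum]
      refine Finset.sum_congr rfl fun x _ => ?_
      rw [Finset.mul_sum]
      exact Finset.sum_congr rfl fun y _ => by ring
    simp only [h1]
    rw [Finset.sum_comm]
    have h2 : ∀ x : ((p : P) → ZMod (n p)), ∑ a : ((p : P) → ZMod (n p)), ∑ y : ((p : P) → ZMod (n p)), ((v x : ℂ) * (v y : ℂ)) *
        (((sieveEigenvalue n b (Finset.univ.filter fun p => a p ≠ 0) : ℝ) : ℂ) *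
          (chi n a x * (starRingEnd ℂ) (chi n a y)))
        = ∑ y : ((p : P) → ZMod (n p)), ((v x : ℂ) * (v y : ℂ)) * ((∏ p, (n p : ℂ)) * ((sieveMatrix n b x y : ℝ) : ℂ)) := by
      intro x
      rw [Finset.sum_comm]
      refine Finset.sum_congr rfl fun y _ => ?_
      rw [← Finset.mul_sum, entry_identity]
    simp only [h2]
    have hNC : (N : ℂ) = ∏ p, (n p : ℂ) := by rw [hN]; push_cast; rfl
    rw [hQ, hNC]
    push_cast
    rw [Finset.mul_sum]
    refine Finset.sum_congr rfl fun x _ => ?_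
    rw [Finset.mul_sum, Finset.mul_sum]
    refine Finset.sum_congr rfl fun y _ => by ring
  -- rewrite LHS of key as a real number
  have key2 : (N * Q : ℝ) = ∑ a : ((p : P) → ZMod (n p)),
      sieveEigenvalue n b (Finset.univ.filter fun p => a p ≠ 0) * Complex.normSq (S a) := by
    have : ((N * Q : ℝ) : ℂ) = ((∑ a : ((p : P) → ZMod (n p)),
        sieveEigenvalue n b (Finset.univ.filter fun p => a p ≠ 0) * Complex.normSq (S a) : ℝ) : ℂ) := by
      rw [Complex.ofReal_mul, ← key]
      push_cast
      refine Finset.sum_congr rfl fun a _ => ?_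
      rw [Complex.mul_conj]
    exact_mod_cast this
  have hsum : 0 ≤ N * Q := by
    rw [key2]
    exact Finset.sum_nonneg fun a _ =>
      mul_nonneg (hb _) (Complex.normSq_nonneg _)
  nlinarith [hNpos, hsum]

lemma sieve_isHermitian (b : Finset P → ℝ) : (sieveMatrix n b).IsHermitian := by
  ext i j
  simp only [Matrix.conjTranspose_apply, star_trivial]
  unfold sieveMatrix
  congr 1
  ext p
  simp [sub_eq_zero, eq_comm]

lemma map_posSemidef (b : Finset P → ℝ) (h : (sieveMatrix n b).PosSemidef) :
    ((sieveMatrix n b).map Complex.ofReal).PosSemidef := by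
  open scoped MatrixOrder in
  obtain ⟨C, hC⟩ := CStarAlgebra.nonneg_iff_eq_star_mul_self.mp h.nonneg
  have hmap : (sieveMatrix n b).map Complex.ofReal
      = (C.map Complex.ofReal)ᴴ * (C.map Complex.ofReal) := by
    rw [hC]
    ext i j
    simp only [Matrix.map_apply, Matrix.mul_apply, Matrix.star_eq_conjTranspose, Matrix.conjTranspose_apply, star_trivial,
      Complex.star_def, Complex.conj_ofReal]
    push_cast
    rfl
  rw [hmap]
  exact Matrix.posSemidef_conjTranspose_mul_self _

lemma eig_nonneg_of_psd (b : Finset P → ℝ) (hn : ∀ p, 2 ≤ n p)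
    (h : (sieveMatrix n b).PosSemidef) (k : Finset P) : 0 ≤ sieveEigenvalue n b k := by
  classical
  set a : (p : P) → ZMod (n p) := fun p => if p ∈ k then 1 else 0 with hadef
  have ha : (Finset.univ.filter fun p => a p ≠ 0) = k := by
    ext p
    simp only [Finset.mem_filter, Finset.mem_univ, true_and, hadef]
    by_cases hp : p ∈ k
    · haveI : Fact (1 < n p) := ⟨hn p⟩
      simp [hp]
    · simp [hp]
  have hmap := map_posSemidef n b h
  have h2 := hmap.dotProduct_mulVec_nonneg (chi n a)
  have hform : dotProduct (star (chi n a))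
      (((sieveMatrix n b).map Complex.ofReal).mulVec (chi n a))
      = ((sieveEigenvalue n b k : ℝ) : ℂ) * (Fintype.card ((p : P) → ZMod (n p)) : ℂ) := by
    unfold dotProduct Matrix.mulVec
    calc ∑ x : (p : P) → ZMod (n p), (star (chi n a)) x *
            ∑ y : (p : P) → ZMod (n p), ((sieveMatrix n b).map Complex.ofReal) x y * chi n a y
        = ∑ x : (p : P) → ZMod (n p), (starRingEnd ℂ) (chi n a x) *
            (((sieveEigenvalue n b k : ℝ) : ℂ) * chi n a x) := by
          refine Finset.sum_congr rfl fun x _ => ?_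
          congr 1
          have := mulVec_chi n b a x
          rw [ha] at this
          rw [← this]
          rfl
      _ = ∑ x : (p : P) → ZMod (n p), ((sieveEigenvalue n b k : ℝ) : ℂ) * 1 := by
          refine Finset.sum_congr rfl fun x _ => ?_
          rw [← conj_chi_mul_self n a x]
          ring
      _ = _ := by
          rw [Finset.sum_const]
          simp [mul_comm]
  rw [hform] at h2
  have hcast : ((sieveEigenvalue n b k : ℝ) : ℂ) * (Fintype.card ((p : P) → ZMod (n p)) : ℂ)
      = ((sieveEigenvalue n b k * Fintype.card ((p : P) → ZMod (n p)) : ℝ) : ℂ) := by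
    push_cast; ring
  rw [hcast] at h2
  have h3 : (0:ℝ) ≤ sieveEigenvalue n b k * Fintype.card ((p : P) → ZMod (n p)) := by
    rwa [← Complex.zero_le_real]
  have hcard : (0:ℝ) < Fintype.card ((p : P) → ZMod (n p)) := by
    exact_mod_cast Fintype.card_pos
  nlinarith

set_option maxHeartbeats 1000000 in
/-- The Fourier transform diagonalizes `B_{ij} = b_{(j-i,P)}`: each character
`x ↦ ∏_p e^{2πi a_p x_p / n_p}` is an eigenvector with eigenvalue depending only
on the support `k = {p : a_p ≠ 0}`, namely `∑_d b_d ∏_{p ∉ d, p ∉ k}(n_p - 1) ∏_{p ∉ d, p ∈ k}(-1)`;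
in particular `B` is PSD iff all these quantities are nonnegative. -/
theorem sieveMatrix_diagonalized (n : P → ℕ) [∀ p, NeZero (n p)]
    (hn : ∀ p, 2 ≤ n p) (b : Finset P → ℝ) :
    (∀ a : (p : P) → ZMod (n p),
      ((sieveMatrix n b).map (Complex.ofReal)).mulVec
          (fun x : (p : P) → ZMod (n p) =>
            ∏ p : P, Complex.exp (2 * Real.pi * Complex.I *
              (((a p).val : ℂ) * ((x p).val : ℂ) / ((n p : ℕ) : ℂ)))) =
        ((sieveEigenvalue n b (Finset.univ.filter fun p => a p ≠ 0) : ℝ) : ℂ) •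
          (fun x : (p : P) → ZMod (n p) =>
            ∏ p : P, Complex.exp (2 * Real.pi * Complex.I *
              (((a p).val : ℂ) * ((x p).val : ℂ) / ((n p : ℕ) : ℂ)))))
    ∧ ((sieveMatrix n b).PosSemidef ↔ ∀ k : Finset P, 0 ≤ sieveEigenvalue n b k) := by
  classical
  constructor
  · intro a
    have hχ : (fun x : (p : P) → ZMod (n p) =>
        ∏ p : P, Complex.exp (2 * Real.pi * Complex.I *
          (((a p).val : ℂ) * ((x p).val : ℂ) / ((n p : ℕ) : ℂ)))) = chi n a := by
      funext x
      refine Finset.prod_congr rfl fun p _ => ?_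
      show _ = zE (a p) (x p)
      rw [zE, zEta]
      congr 1
      push_cast
      ring
    rw [hχ]
    funext x
    simp only [Matrix.mulVec, dotProduct, Matrix.map_apply, Pi.smul_apply, smul_eq_mul]
    exact mulVec_chi n b a x
  · constructor
    · exact fun h k => eig_nonneg_of_psd n b hn h k
    · intro hb
      refine Matrix.PosSemidef.of_dotProduct_mulVec_nonneg (sieve_isHermitian n b) ?_
      intro v
      have := quad_nonneg n b hb v
      simpa [dotProduct, Matrix.mulVec, star_trivial] using this
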